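/- Let p_1, ..., p_D ∈ [0,1] be nonincreasing with p_{d+1} < 1, and let ζ ≥ 0 with p_d − p_{d+1} + ζ appearing as a deficit term. If p_d + ζ_d ≤ p_1 fails (i.e., p_d + ζ_d − p_1 ≥ 0), then the difference ΔE_4^1 = ζ_1 + Π_{i=2}^{d−1}(p_i + ζ_i)·ζ_1·(p_d + ζ_d − p_1)·[1 + Σ_{k=d+1}^D Π_{i=d+1}^k (p_i − ζ_i)] is nonnegative; and if p_d + ζ_d − p_1 < 0, then ΔE_4^1 ≥ ζ_1·[(1 − p_1) + (p_d + ζ_d − p_{d+1})]/(1 − p_{d+1}) ≥ 0. -/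
import Mathlib


open Finset

/-- Case analysis for `ΔE_4^1`: with `ΔE41 = ζ_1 + ∏_{i=2}^{d−1}(p_i + ζ_i)·ζ_1·
(p_d + ζ_d − p_1)·[1 + ∑_{k=d+1}^D ∏_{i=d+1}^k (p_i − ζ_i)]`, if
`p_d + ζ_d − p_1 ≥ 0` then `ΔE41 ≥ 0`; and if `p_d + ζ_d − p_1 < 0` then
`ΔE41 ≥ ζ_1·[(1 − p_1) + (p_d + ζ_d − p_{d+1})]/(1 − p_{d+1}) ≥ 0`. -/
theorem stmt15 (D d : ℕ) (hd : 1 < d) (hdD : d < D) (p ζ : ℕ → ℝ)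
    (hp1 : p 1 ≤ 1) (hpD : 0 ≤ p D)
    (hmono : ∀ i, 1 ≤ i → i < D → p (i + 1) ≤ p i)
    (hpd1 : p (d + 1) < 1)
    (hζ0 : ∀ i ∈ Finset.Icc 1 D, 0 ≤ ζ i)
    (hup : ∀ i ∈ Finset.Icc 1 d, p i + ζ i ≤ 1)
    (hdsum : p d + ζ d + ζ 1 ≤ 1)
    (hge : p (d + 1) ≤ p d + ζ d)
    (hdown0 : ∀ i ∈ Finset.Icc (d + 1) D, 0 ≤ p i - ζ i)
    (hdown1 : ∀ i ∈ Finset.Icc (d + 1) D, p i - ζ i ≤ 1) :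
    (0 ≤ p d + ζ d - p 1 →
      0 ≤ ζ 1 + (∏ i ∈ Finset.Icc 2 (d - 1), (p i + ζ i)) * ζ 1 * (p d + ζ d - p 1) *
            (1 + ∑ k ∈ Finset.Icc (d + 1) D, ∏ i ∈ Finset.Icc (d + 1) k, (p i - ζ i)))
    ∧ (p d + ζ d - p 1 < 0 →
        (ζ 1 * (((1 - p 1) + (p d + ζ d - p (d + 1))) / (1 - p (d + 1)))
            ≤ ζ 1 + (∏ i ∈ Finset.Icc 2 (d - 1), (p i + ζ i)) * ζ 1 * (p d + ζ d - p 1) *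
                (1 + ∑ k ∈ Finset.Icc (d + 1) D, ∏ i ∈ Finset.Icc (d + 1) k, (p i - ζ i)))
          ∧ 0 ≤ ζ 1 * (((1 - p 1) + (p d + ζ d - p (d + 1))) / (1 - p (d + 1)))) := by
  -- monotonicity chain
  have chain : ∀ i j : ℕ, 1 ≤ i → i ≤ j → j ≤ D → p j ≤ p i := by
    intro i j h1 hij hjD
    induction j, hij using Nat.le_induction with
    | base => exact le_rfl
    | succ n hn ih =>
      exact le_trans (hmono n (le_trans h1 hn) (by omega)) (ih (by omega))
  have hζ1 : 0 ≤ ζ 1 := hζ0 1 (by simp; omega)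
  set q := p (d + 1) with hq
  have hq0 : 0 ≤ q := le_trans hpD (chain (d + 1) D (by omega) (by omega) le_rfl)
  have hq1 : 0 < 1 - q := by linarith
  set P := ∏ i ∈ Finset.Icc 2 (d - 1), (p i + ζ i) with hP
  set S := ∑ k ∈ Finset.Icc (d + 1) D, ∏ i ∈ Finset.Icc (d + 1) k, (p i - ζ i) with hS
  have hpnn : ∀ i ∈ Finset.Icc 1 D, 0 ≤ p i := by
    intro i hi
    rw [Finset.mem_Icc] at hi
    exact le_trans hpD (chain i D hi.1 hi.2 le_rfl)
  have hP0 : 0 ≤ P := by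
    apply Finset.prod_nonneg
    intro i hi
    rw [Finset.mem_Icc] at hi
    have h1 : 0 ≤ p i := hpnn i (by rw [Finset.mem_Icc]; omega)
    have h2 : 0 ≤ ζ i := hζ0 i (by rw [Finset.mem_Icc]; omega)
    linarith
  have hP1 : P ≤ 1 := by
    apply Finset.prod_le_one
    · intro i hi
      rw [Finset.mem_Icc] at hi
      have h1 : 0 ≤ p i := hpnn i (by rw [Finset.mem_Icc]; omega)
      have h2 : 0 ≤ ζ i := hζ0 i (by rw [Finset.mem_Icc]; omega)
      linarith
    · intro i hi
      rw [Finset.mem_Icc] at hi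
      exact hup i (by rw [Finset.mem_Icc]; omega)
  have hS0 : 0 ≤ S := by
    apply Finset.sum_nonneg
    intro k hk
    rw [Finset.mem_Icc] at hk
    apply Finset.prod_nonneg
    intro i hi
    rw [Finset.mem_Icc] at hi
    exact hdown0 i (by rw [Finset.mem_Icc]; omega)
  -- each product bounded by q^(k-d)
  have hterm : ∀ k ∈ Finset.Icc (d + 1) D,
      (∏ i ∈ Finset.Icc (d + 1) k, (p i - ζ i)) ≤ q ^ (k - d) := by
    intro k hk
    rw [Finset.mem_Icc] at hk
    have hcard : (Finset.Icc (d + 1) k).card = k - d := by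
      rw [Nat.card_Icc]; omega
    calc (∏ i ∈ Finset.Icc (d + 1) k, (p i - ζ i))
        ≤ ∏ _i ∈ Finset.Icc (d + 1) k, q := by
          apply Finset.prod_le_prod
          · intro i hi
            rw [Finset.mem_Icc] at hi
            exact hdown0 i (by rw [Finset.mem_Icc]; omega)
          · intro i hi
            rw [Finset.mem_Icc] at hi
            have h1 : 0 ≤ ζ i := hζ0 i (by rw [Finset.mem_Icc]; omega)
            have h2 : p i ≤ q := chain (d + 1) i (by omega) hi.1 (by omega)
            linarith
      _ = q ^ (k - d) := by rw [Finset.prod_const, hcard]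
  -- geometric sum identity
  have geo : ∀ m : ℕ, d ≤ m →
      (∑ k ∈ Finset.Icc (d + 1) m, q ^ (k - d)) * (1 - q) = q - q ^ (m - d + 1) := by
    intro m hm
    induction m, hm using Nat.le_induction with
    | base =>
      rw [show Finset.Icc (d + 1) d = ∅ by rw [Finset.Icc_eq_empty_iff]; omega]
      simp
    | succ n hn ih =>
      rw [Finset.sum_Icc_succ_top (by omega : d + 1 ≤ n + 1)]
      have e1 : n + 1 - d = n - d + 1 := by omega
      have e2 : n + 1 - d + 1 = n - d + 1 + 1 := by omega
      rw [add_mul, ih, e1, pow_succ]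
      ring
  have hSq : S * (1 - q) ≤ q := by
    have h1 : S ≤ ∑ k ∈ Finset.Icc (d + 1) D, q ^ (k - d) :=
      Finset.sum_le_sum hterm
    have h2 := geo D (by omega)
    have h3 : 0 ≤ q ^ (D - d + 1) := pow_nonneg hq0 _
    nlinarith
  have hS1 : 1 + S ≤ 1 / (1 - q) := by
    rw [le_div_iff₀ hq1]
    nlinarith
  constructor
  · intro hx
    have h1S : (0:ℝ) ≤ 1 + S := by linarith
    have := mul_nonneg (mul_nonneg (mul_nonneg hP0 hζ1) hx) h1S
    linarith
  · intro hx
    constructor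
    · -- key: 1/(1-q) * x ≤ P * (1+S) * x since x < 0 and P*(1+S) ≤ 1/(1-q)
      set x := p d + ζ d - p 1 with hxdef
      have hPS : P * (1 + S) ≤ 1 / (1 - q) := by
        calc P * (1 + S) ≤ 1 * (1 + S) :=
              mul_le_mul_of_nonneg_right hP1 (by linarith)
          _ = 1 + S := one_mul _
          _ ≤ 1 / (1 - q) := hS1
      have hkey : x * (1 / (1 - q)) ≤ x * (P * (1 + S)) :=
        mul_le_mul_of_nonpos_left hPS (le_of_lt hx)
      have hLHS : ((1 - p 1) + (p d + ζ d - q)) / (1 - q) = 1 + x * (1 / (1 - q)) := by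
        field_simp
        ring
      rw [hLHS]
      have : ζ 1 * (1 + x * (1 / (1 - q))) ≤ ζ 1 * (1 + x * (P * (1 + S))) := by
        apply mul_le_mul_of_nonneg_left _ hζ1
        linarith
      calc ζ 1 * (1 + x * (1 / (1 - q))) ≤ ζ 1 * (1 + x * (P * (1 + S))) := this
        _ = ζ 1 + P * ζ 1 * x * (1 + S) := by ring
    · apply mul_nonneg hζ1
      apply div_nonneg _ (le_of_lt hq1)
      linarith
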